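/- Let 𝒲 be a nonempty closed convex subset of the simplex Δ ⊂ ℝ^n, and suppose the function x ↦ min_{w∈𝒲} ∑ᵢ wᵢ xᵢ is symmetric under permutations of coordinates. Then 𝒲 is symmetric: for every w ∈ 𝒲 and permutation π, the permuted vector w∘π is in 𝒲. -/
import Mathlib


/-- If the min-of-weighted-sums function over a nonempty closed convex
subset of the simplex is symmetric under coordinate permutations, then the weight
set itself is symmetric. -/
theorem stmt_10 (n : ℕ) (hn : 0 < n) (𝒲 : Set (Fin n → ℝ))
    (h𝒲ne : 𝒲.Nonempty) (h𝒲closed : IsClosed 𝒲) (h𝒲convex : Convex ℝ 𝒲)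
    (h𝒲Δ : ∀ w ∈ 𝒲, (∀ i, 0 ≤ w i) ∧ ∑ i, w i = 1)
    (hsym : ∀ (π : Equiv.Perm (Fin n)) (x : Fin n → ℝ),
      sInf ((fun w => ∑ i, w i * x (π i)) '' 𝒲) = sInf ((fun w => ∑ i, w i * x i) '' 𝒲)) :
    ∀ w ∈ 𝒲, ∀ π : Equiv.Perm (Fin n), (fun i => w (π i)) ∈ 𝒲 := by
  -- bound: each coordinate of a point of 𝒲 is between 0 and 1
  have hbdd : ∀ y : Fin n → ℝ, BddBelow ((fun v => ∑ i, v i * y i) '' 𝒲) := by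
    intro y
    refine ⟨-∑ i, |y i|, ?_⟩
    rintro _ ⟨v, hv, rfl⟩
    obtain ⟨hv0, hv1⟩ := h𝒲Δ v hv
    have hle : ∀ i, v i ≤ 1 := by
      intro i
      calc v i ≤ ∑ j, v j := Finset.single_le_sum (fun j _ => hv0 j) (Finset.mem_univ i)
      _ = 1 := hv1
    rw [neg_le, ← Finset.sum_neg_distrib]
    apply Finset.sum_le_sum
    intro i _
    calc -(v i * y i) ≤ |v i * y i| := neg_le_abs _
      _ = v i * |y i| := by rw [abs_mul, abs_of_nonneg (hv0 i)]
      _ ≤ 1 * |y i| := mul_le_mul_of_nonneg_right (hle i) (abs_nonneg _)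
      _ = |y i| := one_mul _
  intro w hw π
  by_contra hmem
  -- separate
  obtain ⟨f, u, hfu, hsep⟩ :=
    geometric_hahn_banach_point_closed h𝒲convex h𝒲closed hmem
  set x : Fin n → ℝ := fun i => f (Pi.single i 1) with hx
  have hf : ∀ v : Fin n → ℝ, f v = ∑ i, v i * x i := by
    intro v
    have hv : v = ∑ i, Pi.single i (v i) := (Finset.univ_sum_single v).symm
    calc f v = f (∑ i, Pi.single i (v i)) := by rw [← hv]
      _ = ∑ i, f (Pi.single i (v i)) := map_sum f _ _
      _ = ∑ i, v i * x i := by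
          refine Finset.sum_congr rfl fun i _ => ?_
          have : Pi.single i (v i) = (v i) • (Pi.single i (1 : ℝ) : Fin n → ℝ) := by
            ext j; by_cases h : j = i <;> simp [Pi.single_apply, h, mul_comm]
          rw [this, map_smul]; rfl
  have hum : u ≤ sInf ((fun v => ∑ i, v i * x i) '' 𝒲) := by
    apply le_csInf (h𝒲ne.image _)
    rintro _ ⟨v, hv, rfl⟩
    have := hsep v hv
    rw [hf v] at this
    exact this.le
  -- f (w ∘ π) = ∑ i, w i * x (π⁻¹ i)
  have hfwπ : f (fun i => w (π i)) = ∑ i, w i * x (π.symm i) := by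
    rw [hf]
    exact Fintype.sum_equiv π _ _ (fun i => by simp)
  have hge : sInf ((fun v => ∑ i, v i * x i) '' 𝒲) ≤ f (fun i => w (π i)) := by
    rw [hfwπ, ← hsym π.symm x]
    exact csInf_le (hbdd (fun i => x (π.symm i))) ⟨w, hw, rfl⟩
  linarith [hfu, hum, hge]
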